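/- Column interchange for quantum determinants: Let A be an r×r matrix satisfying the cross-commutation relation ad = da + q^{-1}cb − qbc for every 2×2 submatrix (with a,b,c,d the entries in positions (i,j),(i,j'),(i',j),(i',j') for i<i', j<j'). If A' is obtained from A by interchanging columns i and j, then det_q(A') = (−q)^{−inv(ij)} det_q(A), where inv(ij) is the number of inversions of the transposition (i j). -/

import Mathlib

/-- Number of inversions of a permutation of `Fin r`. -/
def invCount {r : ℕ} (π : Equiv.Perm (Fin r)) : ℕ :=
  (Finset.univ.filter fun p : Fin r × Fin r => p.1 < p.2 ∧ π p.2 < π p.1).card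

/-- The quantum determinant of a square matrix over a possibly noncommutative ring:
`det_q(B) = Σ_π (-q)^{-inv(π)} B_{π(1)1} ⋯ B_{π(r)r}` (ordered product). -/
noncomputable def detq {R : Type*} [Ring R] {r : ℕ} (q : Rˣ)
    (B : Matrix (Fin r) (Fin r) R) : R :=
  ∑ π : Equiv.Perm (Fin r),
    (((-q) ^ (-(invCount π : ℤ)) : Rˣ) : R) * (List.ofFn fun i => B (π i) i).prod

/-- `A` is right-quantum: the entries in each column `q`-commute
(`ca = q·ac`, `db = q·bd`) and every `2 × 2` submatrix `(a b; c d)` satisfies the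
cross commutation relation `ad = da + q⁻¹·cb − q·bc`. -/
def RightQuantum {R : Type*} [Ring R] {r : ℕ} (q : Rˣ)
    (A : Matrix (Fin r) (Fin r) R) : Prop :=
  (∀ j i i' : Fin r, i < i' → A i' j * A i j = (q : R) * (A i j * A i' j)) ∧
  (∀ i i' j j' : Fin r, i < i' → j < j' →
    A i j * A i' j' =
      A i' j' * A i j + ((q⁻¹ : Rˣ) : R) * (A i' j * A i j') - (q : R) * (A i j' * A i' j))

set_option linter.unusedSectionVars false
set_option linter.unnecessarySeqFocus false

section auxlemmas
variable {R : Type*} [Ring R] {r : ℕ}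



lemma swap_lt {r : ℕ} (a b x y : Fin r) (hab : (a:ℕ) + 1 = (b:ℕ)) (hxy : x < y)
    (hne : ¬(x = a ∧ y = b)) : Equiv.swap a b x < Equiv.swap a b y := by
  rw [Equiv.swap_apply_def, Equiv.swap_apply_def]
  split_ifs <;>
    (simp only [Fin.ext_iff, Fin.lt_def, not_and] at * <;> omega)

lemma invCount_one {r : ℕ} : invCount (1 : Equiv.Perm (Fin r)) = 0 := by
  rw [invCount, Finset.card_eq_zero, Finset.filter_eq_empty_iff]
  rintro p - ⟨h1, h2⟩
  simp only [Equiv.Perm.one_apply] at h2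
  exact absurd h1 (not_lt.2 h2.le)

lemma invCount_mul_swap {r : ℕ} (π : Equiv.Perm (Fin r)) (a b : Fin r)
    (hab : (a:ℕ) + 1 = (b:ℕ)) (h : π a < π b) :
    invCount (π * Equiv.swap a b) = invCount π + 1 := by
  classical
  set s := Equiv.swap a b with hs
  have hcomp : ∀ x, (π * s) x = π (s x) := fun x => rfl
  have hmem : ((a, b) : Fin r × Fin r) ∈
      (Finset.univ.filter fun p : Fin r × Fin r => p.1 < p.2 ∧ (π * s) p.2 < (π * s) p.1) := by
    simp only [Finset.mem_filter, Finset.mem_univ, true_and, hcomp]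
    refine ⟨Fin.lt_def.2 (by omega), ?_⟩
    rw [hs, Equiv.swap_apply_left, Equiv.swap_apply_right]
    exact h
  rw [invCount, ← Finset.card_erase_add_one hmem, invCount]
  congr 1
  refine Finset.card_bij' (fun p _ => (s p.1, s p.2)) (fun p _ => (s p.1, s p.2)) ?_ ?_ ?_ ?_
  · rintro ⟨x, y⟩ hp
    simp only [Finset.mem_erase, Finset.mem_filter, Finset.mem_univ, true_and, hcomp] at hp
    obtain ⟨hpne, hlt, hinv⟩ := hp
    simp only [Finset.mem_filter, Finset.mem_univ, true_and]
    have hne : ¬(x = a ∧ y = b) := by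
      rintro ⟨rfl, rfl⟩; exact hpne rfl
    exact ⟨swap_lt a b x y hab hlt hne, hinv⟩
  · rintro ⟨x, y⟩ hp
    simp only [Finset.mem_filter, Finset.mem_univ, true_and] at hp
    obtain ⟨hlt, hinv⟩ := hp
    have hne : ¬(x = a ∧ y = b) := by
      rintro ⟨rfl, rfl⟩; exact absurd hinv (not_lt.2 h.le)
    simp only [Finset.mem_erase, Finset.mem_filter, Finset.mem_univ, true_and, hcomp]
    refine ⟨?_, swap_lt a b x y hab hlt hne, ?_⟩
    · intro hxy
      have h1 : s x = a := congrArg Prod.fst hxy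
      have h2 : s y = b := congrArg Prod.snd hxy
      have hx : x = b := by
        have := congrArg s h1
        rwa [Equiv.swap_apply_self, hs, Equiv.swap_apply_left] at this
      have hy : y = a := by
        have := congrArg s h2
        rwa [Equiv.swap_apply_self, hs, Equiv.swap_apply_right] at this
      rw [hx, hy, Fin.lt_def] at hlt; omega
    · rwa [Equiv.swap_apply_self, Equiv.swap_apply_self]
  · rintro ⟨x, y⟩ _; simp [hs, Equiv.swap_apply_self]
  · rintro ⟨x, y⟩ _; simp [hs, Equiv.swap_apply_self]



lemma ofFn_take_eq (f g : Fin r → R) (k : ℕ) (hfg : ∀ i : Fin r, (i:ℕ) < k → f i = g i) :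
    (List.ofFn f).take k = (List.ofFn g).take k := by
  apply List.ext_getElem
  · simp
  · intro n h1 h2
    simp only [List.length_take, List.length_ofFn, lt_min_iff] at h1
    rw [List.getElem_take, List.getElem_take, List.getElem_ofFn, List.getElem_ofFn]
    exact hfg _ h1.1

lemma ofFn_drop_eq (f g : Fin r → R) (k : ℕ) (hfg : ∀ i : Fin r, k ≤ (i:ℕ) → f i = g i) :
    (List.ofFn f).drop k = (List.ofFn g).drop k := by
  apply List.ext_getElem
  · simp
  · intro n h1 h2
    rw [List.getElem_drop, List.getElem_drop, List.getElem_ofFn, List.getElem_ofFn]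
    exact hfg _ (by simp)

lemma ofFn_prod_split (f : Fin r → R) (k : ℕ) (hk : k + 1 < r) :
    (List.ofFn f).prod =
      ((List.ofFn f).take k).prod *
        (f ⟨k, by omega⟩ * f ⟨k+1, hk⟩) * ((List.ofFn f).drop (k+2)).prod := by
  have hlen : (List.ofFn f).length = r := List.length_ofFn (f := f)
  have h1 : k < (List.ofFn f).length := by omega
  have h2 : k + 1 < (List.ofFn f).length := by omega
  have e0 : List.take (k+2) (List.ofFn f) = List.take ((k+1)+1) (List.ofFn f) := rfl
  rw [← List.prod_take_mul_prod_drop (List.ofFn f) (k+2), e0,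
    List.prod_take_succ _ (k+1) h2, List.prod_take_succ _ k h1,
    List.getElem_ofFn, List.getElem_ofFn]
  congr 1
  rw [mul_assoc]

lemma sum_pair (g : Equiv.Perm (Fin r) → R) (a b : Fin r) (hab : (a:ℕ) + 1 = (b:ℕ)) :
    ∑ π : Equiv.Perm (Fin r), g π =
      ∑ π ∈ Finset.univ.filter (fun π : Equiv.Perm (Fin r) => π a < π b),
        (g π + g (π * Equiv.swap a b)) := by
  classical
  have hne : a ≠ b := by simp only [ne_eq, Fin.ext_iff]; omega
  have hsa : ∀ π : Equiv.Perm (Fin r), (π * Equiv.swap a b) a = π b := by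
    intro π; simp [Equiv.Perm.mul_apply, Equiv.swap_apply_left]
  have hsb : ∀ π : Equiv.Perm (Fin r), (π * Equiv.swap a b) b = π a := by
    intro π; simp [Equiv.Perm.mul_apply, Equiv.swap_apply_right]
  have hss : ∀ π : Equiv.Perm (Fin r), (π * Equiv.swap a b) * Equiv.swap a b = π := by
    intro π; rw [mul_assoc, Equiv.swap_mul_self, mul_one]
  rw [← Finset.sum_filter_add_sum_filter_not Finset.univ
      (fun π : Equiv.Perm (Fin r) => π a < π b) g, Finset.sum_add_distrib]
  congr 1
  refine Finset.sum_bij' (fun π _ => π * Equiv.swap a b) (fun π _ => π * Equiv.swap a b)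
    ?_ ?_ ?_ ?_ ?_
  · intro π hπ
    simp only [Finset.mem_filter, Finset.mem_univ, true_and, not_lt] at hπ ⊢
    rw [hsa, hsb]
    exact lt_of_le_of_ne hπ (fun e => hne (π.injective e).symm)
  · intro π hπ
    simp only [Finset.mem_filter, Finset.mem_univ, true_and, not_lt] at hπ ⊢
    rw [hsa, hsb]
    exact hπ.le
  · intro π _; exact hss π
  · intro π _; exact hss π
  · intro π _; rw [hss]



lemma core_identity (q : Rˣ) (a b c d : R)
    (hrel : a * d = d * a + (↑(q⁻¹) : R) * (c * b) - (↑q : R) * (b * c)) :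
    b * c + (↑((-q)⁻¹) : R) * (d * a) =
      (↑((-q)⁻¹) : R) * (a * d) + (↑((-q)⁻¹) : R) * ((↑((-q)⁻¹) : R) * (c * b)) := by
  have hval : ((((-q)⁻¹ : Rˣ)) : R) = -(↑(q⁻¹) : R) := by
    rw [inv_neg, Units.val_neg]
  have hqi : (↑(q⁻¹) : R) * ((↑q : R) * (b * c)) = b * c := by
    rw [← mul_assoc, ← Units.val_mul, inv_mul_cancel, Units.val_one, one_mul]
  rw [hval, hrel]
  simp only [neg_mul, mul_neg, neg_neg, sub_neg_eq_add, mul_sub, mul_add]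
  rw [hqi]
  abel

lemma detq_step (q : Rˣ) (hq : ∀ y : R, Commute (q : R) y)
    (A : Matrix (Fin r) (Fin r) R)
    (hA : ∀ i i' j j' : Fin r, i < i' → j < j' →
      A i j * A i' j' =
        A i' j' * A i j + ((q⁻¹ : Rˣ) : R) * (A i' j * A i j') - (q : R) * (A i j' * A i' j))
    (σ : Equiv.Perm (Fin r)) (a b : Fin r) (hab : (a:ℕ) + 1 = (b:ℕ))
    (hσ : σ a < σ b) :
    detq q (A.submatrix id ⇑(σ * Equiv.swap a b)) =
      (↑((-q)⁻¹) : R) * detq q (A.submatrix id σ) := by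
  classical
  set s := Equiv.swap a b with hs
  set cR : R := (↑((-q)⁻¹) : R) with hcR
  -- centrality
  have hcneg : ∀ y : R, Commute (((-q) : Rˣ) : R) y := fun y => by
    simpa using (hq y).neg_left
  have hcent : ∀ y : R, Commute cR y := fun y => (hcneg y).units_inv_left
  have hCc : ∀ (n : ℤ) (y : R), Commute (((-q) ^ n : Rˣ) : R) y := fun n y =>
    (hcneg y).units_zpow_left n
  -- coefficient recursion
  have hCsucc : ∀ n : ℕ, (((-q) ^ (-((n+1 : ℕ) : ℤ)) : Rˣ) : R)
      = (((-q) ^ (-(n : ℤ)) : Rˣ) : R) * cR := by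
    intro n
    rw [hcR, ← Units.val_mul]
    congr 1
    rw [← zpow_neg_one, ← zpow_add]
    congr 1
    push_cast
    ring
  have hk : (a : ℕ) + 1 < r := by rw [hab]; exact b.isLt
  have hsa : s a = b := Equiv.swap_apply_left a b
  have hsb : s b = a := Equiv.swap_apply_right a b
  have hsother : ∀ i : Fin r, i ≠ a → i ≠ b → s i = i := fun i h1 h2 =>
    Equiv.swap_apply_of_ne_of_ne h1 h2
  have hfa : (⟨(a : ℕ), by omega⟩ : Fin r) = a := by simp
  have hfb : (⟨(a : ℕ) + 1, hk⟩ : Fin r) = b := by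
    apply Fin.ext; simpa using hab
  rw [detq, detq, Finset.mul_sum,
    sum_pair (fun π => (((-q) ^ (-(invCount π : ℤ)) : Rˣ) : R) *
      (List.ofFn fun i => (A.submatrix id ⇑(σ * s)) (π i) i).prod) a b hab,
    sum_pair (fun π => cR * ((((-q) ^ (-(invCount π : ℤ)) : Rˣ) : R) *
      (List.ofFn fun i => (A.submatrix id σ) (π i) i).prod)) a b hab]
  apply Finset.sum_congr rfl
  intro π hπ
  simp only [Finset.mem_filter, Finset.mem_univ, true_and] at hπ
  -- the four functions
  have e1 : (fun i => (A.submatrix id ⇑(σ * s)) (π i) i) = fun i => A (π i) (σ (s i)) := by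
    funext i; simp [Matrix.submatrix_apply]
  have e2 : (fun i => (A.submatrix id ⇑(σ * s)) ((π * s) i) i)
      = fun i => A (π (s i)) (σ (s i)) := by
    funext i; simp [Matrix.submatrix_apply]
  have e3 : (fun i => (A.submatrix id σ) (π i) i) = fun i => A (π i) (σ i) := by
    funext i; simp [Matrix.submatrix_apply]
  have e4 : (fun i => (A.submatrix id σ) ((π * s) i) i) = fun i => A (π (s i)) (σ i) := by
    funext i; simp [Matrix.submatrix_apply]
  rw [e1, e2, e3, e4]
  set f0 : Fin r → R := fun i => A (π i) (σ i) with hf0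
  set f1 : Fin r → R := fun i => A (π i) (σ (s i)) with hf1
  set f2 : Fin r → R := fun i => A (π (s i)) (σ (s i)) with hf2
  set f3 : Fin r → R := fun i => A (π (s i)) (σ i) with hf3
  have hagree : ∀ (i : Fin r), i ≠ a → i ≠ b →
      f1 i = f0 i ∧ f2 i = f0 i ∧ f3 i = f0 i := by
    intro i h1 h2
    refine ⟨?_, ?_, ?_⟩ <;> simp only [hf0, hf1, hf2, hf3, hsother i h1 h2]
  have hlo : ∀ i : Fin r, (i : ℕ) < (a : ℕ) → i ≠ a ∧ i ≠ b := by
    intro i h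
    constructor <;> (intro e; rw [e] at h; omega)
  have hhi : ∀ i : Fin r, (a : ℕ) + 2 ≤ (i : ℕ) → i ≠ a ∧ i ≠ b := by
    intro i h
    constructor <;> (intro e; rw [e] at h; omega)
  set P : R := ((List.ofFn f0).take (a : ℕ)).prod with hP
  set S : R := ((List.ofFn f0).drop ((a : ℕ) + 2)).prod with hS
  have split : ∀ f : Fin r → R, (∀ i : Fin r, i ≠ a → i ≠ b → f i = f0 i) →
      (List.ofFn f).prod = P * (f a * f b) * S := by
    intro f hf
    rw [ofFn_prod_split f (a : ℕ) hk, hfa, hfb]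
    congr 2
    · rw [hP]; congr 1
      exact ofFn_take_eq f f0 _ (fun i h => hf i (hlo i h).1 (hlo i h).2)
    · exact ofFn_drop_eq f f0 _ (fun i h => hf i (hhi i h).1 (hhi i h).2)
  have hsplit1 : (List.ofFn f1).prod = P * (A (π a) (σ b) * A (π b) (σ a)) * S := by
    have := split f1 (fun i h1 h2 => (hagree i h1 h2).1)
    rwa [show f1 a = A (π a) (σ b) by rw [hf1]; simp [hsa],
      show f1 b = A (π b) (σ a) by rw [hf1]; simp [hsb]] at this
  have hsplit2 : (List.ofFn f2).prod = P * (A (π b) (σ b) * A (π a) (σ a)) * S := by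
    have := split f2 (fun i h1 h2 => (hagree i h1 h2).2.1)
    rwa [show f2 a = A (π b) (σ b) by rw [hf2]; simp [hsa],
      show f2 b = A (π a) (σ a) by rw [hf2]; simp [hsb]] at this
  have hsplit0 : (List.ofFn f0).prod = P * (A (π a) (σ a) * A (π b) (σ b)) * S :=
    split f0 (fun _ _ _ => rfl)
  have hsplit3 : (List.ofFn f3).prod = P * (A (π b) (σ a) * A (π a) (σ b)) * S := by
    have := split f3 (fun i h1 h2 => (hagree i h1 h2).2.2)
    rwa [show f3 a = A (π b) (σ a) by rw [hf3]; simp [hsa],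
      show f3 b = A (π a) (σ b) by rw [hf3]; simp [hsb]] at this
  rw [hsplit1, hsplit2, hsplit0, hsplit3,
    invCount_mul_swap π a b hab hπ, hCsucc (invCount π)]
  set Cp : R := (((-q) ^ (-(invCount π : ℤ)) : Rˣ) : R) with hCp
  have hCpc : ∀ y : R, Commute Cp y := fun y => hCc _ y
  -- shuffle scalars
  have hcP : ∀ u v : R, cR * (P * u * v) = P * (cR * u) * v := by
    intro u v
    rw [← mul_assoc, ← mul_assoc, (hcent P).eq, mul_assoc P cR u]
  set a' : R := A (π a) (σ a)
  set b' : R := A (π a) (σ b)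
  set c' : R := A (π b) (σ a)
  set d' : R := A (π b) (σ b)
  have hrel : a' * d' = d' * a' + ((q⁻¹ : Rˣ) : R) * (c' * b') - (q : R) * (b' * c') :=
    hA (π a) (π b) (σ a) (σ b) hπ hσ
  have hcore : b' * c' + cR * (d' * a') = cR * (a' * d') + cR * (cR * (c' * b')) :=
    core_identity q a' b' c' d' hrel
  calc Cp * (P * (b' * c') * S) + Cp * cR * (P * (d' * a') * S)
      = Cp * (P * (b' * c' + cR * (d' * a')) * S) := by
        rw [mul_assoc Cp cR, hcP, mul_add P, add_mul, mul_add]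
    _ = Cp * (P * (cR * (a' * d') + cR * (cR * (c' * b'))) * S) := by rw [hcore]
    _ = cR * (Cp * (P * (a' * d') * S)) + cR * (Cp * cR * (P * (c' * b') * S)) := by
        rw [mul_add P, add_mul, mul_add, ← hcP, ← hcP, ← hcP]
        simp only [← mul_assoc, (hCpc cR).eq]
        rw [mul_assoc cR Cp cR, (hCpc cR).eq, ← mul_assoc]



def nuPerm {r : ℕ} (j : Fin r) : ℕ → Equiv.Perm (Fin r)
  | 0 => 1
  | t+1 => nuPerm j t *
      Equiv.swap ⟨j.val - (t+1), Nat.lt_of_le_of_lt (Nat.sub_le _ _) j.isLt⟩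
        ⟨j.val - t, Nat.lt_of_le_of_lt (Nat.sub_le _ _) j.isLt⟩

def rhoPerm {r : ℕ} (i j : Fin r) : ℕ → Equiv.Perm (Fin r)
  | 0 => nuPerm j (j.val - i.val)
  | u+1 => rhoPerm i j u *
      Equiv.swap ⟨min (i.val+u+1) j.val, Nat.lt_of_le_of_lt (Nat.min_le_right _ _) j.isLt⟩
        ⟨min (i.val+u+2) j.val, Nat.lt_of_le_of_lt (Nat.min_le_right _ _) j.isLt⟩

lemma nuPerm_spec {r : ℕ} (j : Fin r) (t : ℕ) (ht : t ≤ j.val) :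
    (∀ k : Fin r, (k : ℕ) < j.val - t → nuPerm j t k = k) ∧
    (∀ k : Fin r, (k : ℕ) = j.val - t → nuPerm j t k = j) ∧
    (∀ k : Fin r, j.val - t < (k : ℕ) → (k : ℕ) ≤ j.val → (nuPerm j t k).val = (k : ℕ) - 1) ∧
    (∀ k : Fin r, (j : ℕ) < (k : ℕ) → nuPerm j t k = k) := by
  induction t with
  | zero =>
    refine ⟨fun k _ => rfl, fun k hk => ?_, fun k h1 h2 => by omega, fun k _ => rfl⟩
    have : k = j := Fin.ext (by omega)
    rw [this]; rfl
  | succ t IH =>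
    obtain ⟨ih1, ih2, ih3, ih4⟩ := IH (by omega)
    set e1 : Fin r := ⟨j.val - (t+1), Nat.lt_of_le_of_lt (Nat.sub_le _ _) j.isLt⟩ with he1
    set e2 : Fin r := ⟨j.val - t, Nat.lt_of_le_of_lt (Nat.sub_le _ _) j.isLt⟩ with he2
    have happ : ∀ k, nuPerm j (t+1) k = nuPerm j t (Equiv.swap e1 e2 k) := fun k => rfl
    have he1v : (e1 : ℕ) = j.val - (t+1) := rfl
    have he2v : (e2 : ℕ) = j.val - t := rfl
    refine ⟨?_, ?_, ?_, ?_⟩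
    · intro k hk
      rw [happ, Equiv.swap_apply_of_ne_of_ne
        (Fin.ne_of_val_ne (by omega)) (Fin.ne_of_val_ne (by omega))]
      exact ih1 k (by omega)
    · intro k hk
      have : k = e1 := Fin.ext (by omega)
      rw [happ, this, Equiv.swap_apply_left]
      exact ih2 e2 (by omega)
    · intro k h1 h2
      rcases eq_or_ne (k : ℕ) (j.val - t) with he | he
      · have : k = e2 := Fin.ext (by omega)
        rw [happ, this, Equiv.swap_apply_right]
        rw [ih1 e1 (by omega)]
        omega
      · rw [happ, Equiv.swap_apply_of_ne_of_ne
          (Fin.ne_of_val_ne (by omega)) (Fin.ne_of_val_ne (by omega))]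
        exact ih3 k (by omega) h2
    · intro k hk
      rw [happ, Equiv.swap_apply_of_ne_of_ne
        (Fin.ne_of_val_ne (by omega)) (Fin.ne_of_val_ne (by omega))]
      exact ih4 k hk

lemma rhoPerm_spec {r : ℕ} (i j : Fin r) (hij : i < j) (u : ℕ)
    (hu : u ≤ j.val - i.val - 1) :
    (∀ k : Fin r, (k : ℕ) < i.val → rhoPerm i j u k = k) ∧
    (∀ k : Fin r, (k : ℕ) = i.val → rhoPerm i j u k = j) ∧
    (∀ k : Fin r, i.val < (k : ℕ) → (k : ℕ) ≤ i.val + u → rhoPerm i j u k = k) ∧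
    (∀ k : Fin r, (k : ℕ) = i.val + u + 1 → rhoPerm i j u k = i) ∧
    (∀ k : Fin r, i.val + u + 1 < (k : ℕ) → (k : ℕ) ≤ j.val → (rhoPerm i j u k).val = (k : ℕ) - 1) ∧
    (∀ k : Fin r, (j : ℕ) < (k : ℕ) → rhoPerm i j u k = k) := by
  have hij' : i.val < j.val := hij
  induction u with
  | zero =>
    obtain ⟨n1, n2, n3, n4⟩ := nuPerm_spec j (j.val - i.val) (by omega)
    refine ⟨fun k hk => n1 k (by omega), fun k hk => n2 k (by omega),
      fun k h1 h2 => by omega, ?_, ?_, fun k hk => n4 k hk⟩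
    · intro k hk
      apply Fin.ext
      rw [show rhoPerm i j 0 k = nuPerm j (j.val - i.val) k from rfl,
        n3 k (by omega) (by omega)]
      omega
    · intro k h1 h2
      exact n3 k (by omega) h2
  | succ u IH =>
    obtain ⟨ih1, ih2, ih3, ih4, ih5, ih6⟩ := IH (by omega)
    set m1 : Fin r := ⟨min (i.val+u+1) j.val, Nat.lt_of_le_of_lt (Nat.min_le_right _ _) j.isLt⟩
      with hm1
    set m2 : Fin r := ⟨min (i.val+u+2) j.val, Nat.lt_of_le_of_lt (Nat.min_le_right _ _) j.isLt⟩
      with hm2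
    have hm1v : (m1 : ℕ) = i.val + u + 1 := by simp [hm1]; omega
    have hm2v : (m2 : ℕ) = i.val + u + 2 := by simp [hm2]; omega
    have happ : ∀ k, rhoPerm i j (u+1) k = rhoPerm i j u (Equiv.swap m1 m2 k) := fun k => rfl
    refine ⟨?_, ?_, ?_, ?_, ?_, ?_⟩
    · intro k hk
      rw [happ, Equiv.swap_apply_of_ne_of_ne
        (Fin.ne_of_val_ne (by omega)) (Fin.ne_of_val_ne (by omega))]
      exact ih1 k hk
    · intro k hk
      rw [happ, Equiv.swap_apply_of_ne_of_ne
        (Fin.ne_of_val_ne (by omega)) (Fin.ne_of_val_ne (by omega))]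
      exact ih2 k hk
    · intro k h1 h2
      rcases eq_or_ne (k : ℕ) (i.val + u + 1) with he | he
      · have : k = m1 := Fin.ext (by omega)
        rw [happ, this, Equiv.swap_apply_left]
        apply Fin.ext
        rw [ih5 m2 (by omega) (by omega)]
        omega
      · rw [happ, Equiv.swap_apply_of_ne_of_ne
          (Fin.ne_of_val_ne (by omega)) (Fin.ne_of_val_ne (by omega))]
        exact ih3 k h1 (by omega)
    · intro k hk
      have : k = m2 := Fin.ext (by omega)
      rw [happ, this, Equiv.swap_apply_right]
      exact ih4 m1 (by omega)
    · intro k h1 h2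
      rw [happ, Equiv.swap_apply_of_ne_of_ne
        (Fin.ne_of_val_ne (by omega)) (Fin.ne_of_val_ne (by omega))]
      exact ih5 k (by omega) h2
    · intro k hk
      rw [happ, Equiv.swap_apply_of_ne_of_ne
        (Fin.ne_of_val_ne (by omega)) (Fin.ne_of_val_ne (by omega))]
      exact ih6 k hk

lemma rhoPerm_eq_swap {r : ℕ} (i j : Fin r) (hij : i < j) :
    rhoPerm i j (j.val - i.val - 1) = Equiv.swap i j := by
  have hij' : i.val < j.val := hij
  obtain ⟨c1, c2, c3, c4, c5, c6⟩ := rhoPerm_spec i j hij (j.val - i.val - 1) le_rfl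
  apply Equiv.ext
  intro k
  rcases lt_trichotomy (k : ℕ) i.val with h | h | h
  · rw [c1 k h, Equiv.swap_apply_of_ne_of_ne
      (Fin.ne_of_val_ne (by omega)) (Fin.ne_of_val_ne (by omega))]
  · have : k = i := Fin.ext h
    rw [this, c2 i rfl, Equiv.swap_apply_left]
  · rcases lt_trichotomy (k : ℕ) j.val with h2 | h2 | h2
    · rw [c3 k h (by omega), Equiv.swap_apply_of_ne_of_ne
        (Fin.ne_of_val_ne (by omega)) (Fin.ne_of_val_ne (by omega))]
    · have : k = j := Fin.ext h2
      rw [this, c4 j (by omega), Equiv.swap_apply_right]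
    · rw [c6 k h2, Equiv.swap_apply_of_ne_of_ne
        (Fin.ne_of_val_ne (by omega)) (Fin.ne_of_val_ne (by omega))]


lemma coeff_succ (q : Rˣ) (n : ℕ) :
    ((-q)⁻¹ : Rˣ) * (-q) ^ (-(n : ℤ)) = (-q) ^ (-((n + 1 : ℕ) : ℤ)) := by
  rw [← zpow_neg_one, ← zpow_add]
  congr 1
  push_cast
  ring

lemma nu_chain (q : Rˣ) (hq : ∀ y : R, Commute (q : R) y)
    (A : Matrix (Fin r) (Fin r) R)
    (hA : ∀ i i' j j' : Fin r, i < i' → j < j' →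
      A i j * A i' j' =
        A i' j' * A i j + ((q⁻¹ : Rˣ) : R) * (A i' j * A i j') - (q : R) * (A i j' * A i' j))
    (j : Fin r) (t : ℕ) (ht : t ≤ j.val) :
    detq q (A.submatrix id ⇑(nuPerm j t)) =
      (((-q) ^ (-(t : ℤ)) : Rˣ) : R) * detq q A ∧ invCount (nuPerm j t) = t := by
  induction t with
  | zero =>
    have h0 : (A.submatrix id ⇑(nuPerm j 0)) = A := by
      rw [show ⇑(nuPerm j 0) = id from rfl, Matrix.submatrix_id_id]
    rw [h0]
    constructor
    · norm_num
    · exact invCount_one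
  | succ t IH =>
    obtain ⟨ih1, ih2⟩ := IH (by omega)
    obtain ⟨s1, s2, s3, s4⟩ := nuPerm_spec j t (by omega)
    set e1 : Fin r := ⟨j.val - (t+1), Nat.lt_of_le_of_lt (Nat.sub_le _ _) j.isLt⟩ with he1
    set e2 : Fin r := ⟨j.val - t, Nat.lt_of_le_of_lt (Nat.sub_le _ _) j.isLt⟩ with he2
    have hab : (e1 : ℕ) + 1 = (e2 : ℕ) := by
      show (j.val - (t+1)) + 1 = j.val - t
      omega
    have hσ : nuPerm j t e1 < nuPerm j t e2 := by
      rw [s1 e1 (by show j.val - (t+1) < j.val - t; omega),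
        s2 e2 (by show j.val - t = j.val - t; rfl)]
      show (e1 : ℕ) < (j : ℕ)
      show j.val - (t+1) < j.val
      omega
    have hmul : nuPerm j (t+1) = nuPerm j t * Equiv.swap e1 e2 := rfl
    have hstep := detq_step q hq A hA (nuPerm j t) e1 e2 hab hσ
    constructor
    · rw [hmul, hstep, ih1, ← mul_assoc, ← Units.val_mul, coeff_succ]
    · rw [hmul, invCount_mul_swap (nuPerm j t) e1 e2 hab hσ, ih2]

lemma rho_chain (q : Rˣ) (hq : ∀ y : R, Commute (q : R) y)
    (A : Matrix (Fin r) (Fin r) R)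
    (hA : ∀ i i' j j' : Fin r, i < i' → j < j' →
      A i j * A i' j' =
        A i' j' * A i j + ((q⁻¹ : Rˣ) : R) * (A i' j * A i j') - (q : R) * (A i j' * A i' j))
    (i j : Fin r) (hij : i < j) (u : ℕ) (hu : u ≤ j.val - i.val - 1) :
    detq q (A.submatrix id ⇑(rhoPerm i j u)) =
      (((-q) ^ (-(((j.val - i.val) + u : ℕ) : ℤ)) : Rˣ) : R) * detq q A ∧
      invCount (rhoPerm i j u) = (j.val - i.val) + u := by
  have hij' : i.val < j.val := hij
  induction u with
  | zero =>
    have h0 : rhoPerm i j 0 = nuPerm j (j.val - i.val) := rfl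
    rw [h0]
    simpa using nu_chain q hq A hA j (j.val - i.val) (by omega)
  | succ u IH =>
    obtain ⟨ih1, ih2⟩ := IH (by omega)
    obtain ⟨c1, c2, c3, c4, c5, c6⟩ := rhoPerm_spec i j hij u (by omega)
    set m1 : Fin r := ⟨min (i.val+u+1) j.val, Nat.lt_of_le_of_lt (Nat.min_le_right _ _) j.isLt⟩
      with hm1
    set m2 : Fin r := ⟨min (i.val+u+2) j.val, Nat.lt_of_le_of_lt (Nat.min_le_right _ _) j.isLt⟩
      with hm2
    have hm1v : (m1 : ℕ) = i.val + u + 1 := by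
      show min (i.val+u+1) j.val = i.val + u + 1; omega
    have hm2v : (m2 : ℕ) = i.val + u + 2 := by
      show min (i.val+u+2) j.val = i.val + u + 2; omega
    have hab : (m1 : ℕ) + 1 = (m2 : ℕ) := by omega
    have hσ : rhoPerm i j u m1 < rhoPerm i j u m2 := by
      rw [Fin.lt_def, c4 m1 hm1v, c5 m2 (by omega) (by omega)]
      omega
    have hmul : rhoPerm i j (u+1) = rhoPerm i j u * Equiv.swap m1 m2 := rfl
    have hstep := detq_step q hq A hA (rhoPerm i j u) m1 m2 hab hσ
    constructor
    · rw [hmul, hstep, ih1, ← mul_assoc, ← Units.val_mul, coeff_succ]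
      have he : j.val - i.val + u + 1 = j.val - i.val + (u+1) := by omega
      rw [he]
    · rw [hmul, invCount_mul_swap (rhoPerm i j u) m1 m2 hab hσ, ih2]
      omega

lemma detq_swap_columns_lt (q : Rˣ) (hq : ∀ y : R, Commute (q : R) y)
    (A : Matrix (Fin r) (Fin r) R)
    (hA : ∀ i i' j j' : Fin r, i < i' → j < j' →
      A i j * A i' j' =
        A i' j' * A i j + ((q⁻¹ : Rˣ) : R) * (A i' j * A i j') - (q : R) * (A i j' * A i' j))
    (i j : Fin r) (hij : i < j) :
    detq q (A.submatrix id (Equiv.swap i j)) =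
      (((-q) ^ (-(invCount (Equiv.swap i j) : ℤ)) : Rˣ) : R) * detq q A := by
  obtain ⟨h1, h2⟩ := rho_chain q hq A hA i j hij (j.val - i.val - 1) le_rfl
  rw [← rhoPerm_eq_swap i j hij, h2]
  exact h1

end auxlemmas

/-- Column interchange for quantum determinants: if every `2 × 2` submatrix of `A`
satisfies the cross commutation relation, and `A'` is obtained from `A` by
interchanging columns `i` and `j`, then `det_q(A') = (-q)^{-inv((i j))} det_q(A)`. -/
theorem detq_swap_columns {R : Type*} [Ring R] {r : ℕ}
    (q : Rˣ) (hq : ∀ y : R, Commute (q : R) y)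
    (A : Matrix (Fin r) (Fin r) R)
    (hA : ∀ i i' j j' : Fin r, i < i' → j < j' →
      A i j * A i' j' =
        A i' j' * A i j + ((q⁻¹ : Rˣ) : R) * (A i' j * A i j') - (q : R) * (A i j' * A i' j))
    (i j : Fin r) :
    detq q (A.submatrix id (Equiv.swap i j)) =
      (((-q) ^ (-(invCount (Equiv.swap i j) : ℤ)) : Rˣ) : R) * detq q A := by
  rcases lt_trichotomy i j with h | h | h
  · exact detq_swap_columns_lt q hq A hA i j h
  · subst h
    rw [Equiv.swap_self]
    have h1 : invCount (Equiv.refl (Fin r)) = 0 := invCount_one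
    have h2 : (A.submatrix id ⇑(Equiv.refl (Fin r))) = A := by
      rw [Equiv.coe_refl, Matrix.submatrix_id_id]
    rw [h1, h2]
    norm_num
  · rw [Equiv.swap_comm]
    exact detq_swap_columns_lt q hq A hA j i h
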